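/- Let p be an even integer with p > 2, let ν be a real number with 0 < ν < (p−2)/p, and let k ≥ 1 be an integer. There exists a constant C > 0, depending only on p, ν and k, such that for every function f : ℂ → ℝ that is k times continuously differentiable on an open neighborhood of the closed unit disk D = {z ∈ ℂ : ‖z‖ ≤ 1} and satisfies f(0) = 0: Σ_{j=0}^{k} ∫_D ‖z‖^{jp − νp − 2} · ‖D^j f(z)‖^p dA(z) ≤ C · Σ_{j=0}^{k} ∫_D ‖D^j f(z)‖^p dA(z). -/

import Mathlib

open MeasureTheory Metric
open scoped ENNReal

private lemma ftc_bound_aux (f : ℂ → ℝ) (U : Set ℂ) (hU : IsOpen U)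
    (hUB : closedBall (0:ℂ) 1 ⊆ U)
    (hf : ContDiffOn ℝ 1 f U) (hf0 : f 0 = 0) (z : ℂ) (hz : z ∈ closedBall (0:ℂ) 1) :
    |f z| ≤ ∫ t in (0:ℝ)..1, |(fderiv ℝ f (t • z)) z| := by
  have hmem : ∀ t : ℝ, t ∈ Set.uIcc (0:ℝ) 1 → t • z ∈ U := by
    intro t ht
    apply hUB
    rw [Set.uIcc_of_le zero_le_one] at ht
    rw [mem_closedBall_zero_iff, norm_smul, Real.norm_eq_abs, abs_of_nonneg ht.1]
    calc t * ‖z‖ ≤ 1 * 1 := by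
          exact mul_le_mul ht.2 (mem_closedBall_zero_iff.1 hz) (norm_nonneg _) zero_le_one
    _ = 1 := by ring
  have hderiv : ∀ t ∈ Set.uIcc (0:ℝ) 1,
      HasDerivAt (fun s : ℝ => f (s • z)) ((fderiv ℝ f (t • z)) z) t := by
    intro t ht
    have hdf : HasFDerivAt f (fderiv ℝ f (t • z)) (t • z) :=
      ((hf.contDiffAt (hU.mem_nhds (hmem t ht))).differentiableAt one_ne_zero).hasFDerivAt
    have hg : HasDerivAt (fun s : ℝ => s • z) z t := by
      simpa using (hasDerivAt_id t).smul_const z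
    exact hdf.comp_hasDerivAt t hg
  have hcont : ContinuousOn (fun t : ℝ => (fderiv ℝ f (t • z)) z) (Set.uIcc (0:ℝ) 1) := by
    have h1 : ContinuousOn (fderiv ℝ f) U := hf.continuousOn_fderiv_of_isOpen hU le_rfl
    have h2 : ContinuousOn (fun t : ℝ => fderiv ℝ f (t • z)) (Set.uIcc (0:ℝ) 1) :=
      h1.comp (Continuous.continuousOn (by continuity)) hmem
    exact h2.clm_apply continuousOn_const
  have hint : IntervalIntegrable (fun t : ℝ => (fderiv ℝ f (t • z)) z) volume 0 1 :=
    hcont.intervalIntegrable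
  have hftc : ∫ t in (0:ℝ)..1, (fderiv ℝ f (t • z)) z = f ((1:ℝ) • z) - f ((0:ℝ) • z) :=
    intervalIntegral.integral_eq_sub_of_hasDerivAt hderiv hint
  have : f z = ∫ t in (0:ℝ)..1, (fderiv ℝ f (t • z)) z := by
    rw [hftc]; simp [hf0]
  rw [this]
  exact intervalIntegral.abs_integral_le_integral_abs zero_le_one

private lemma hoelder_aux (p : ℕ) (hp : 2 < p) :
    ∃ L : ℝ≥0∞, L ≠ ⊤ ∧ ∀ h : ℝ → ℝ, Measurable h → (∀ t, 0 ≤ h t) →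
      ENNReal.ofReal (∫ t in Set.Ioc (0:ℝ) 1, h t) ^ p
        ≤ L * ∫⁻ t in Set.Ioc (0:ℝ) 1, ENNReal.ofReal (t * h t ^ p) := by
  have hp1 : (1:ℝ) < p := by exact_mod_cast hp.trans_le' one_le_two
  have hp0 : (0:ℝ) < p := by linarith
  have hpn0 : p ≠ 0 := by omega
  set q : ℝ := Real.conjExponent p with hq
  have hpq : Real.HolderConjugate (p:ℝ) q := Real.HolderConjugate.conjExponent hp1
  have hq0 : 0 < q := hpq.symm.pos
  have hqp : (-1:ℝ) < -(q / p) := by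
    rw [hq, Real.conjExponent]
    have h2 : (2:ℝ) < p := by exact_mod_cast hp
    rw [div_div, neg_lt_neg_iff, div_lt_one (by nlinarith)]
    nlinarith
  have hGint : IntegrableOn (fun t : ℝ => t ^ (-(q/p))) (Set.Ioc (0:ℝ) 1) volume := by
    have := intervalIntegral.intervalIntegrable_rpow' (a := 0) (b := 1) hqp
    rwa [intervalIntegrable_iff_integrableOn_Ioc_of_le zero_le_one] at this
  set LqI : ℝ≥0∞ := ∫⁻ t in Set.Ioc (0:ℝ) 1, ENNReal.ofReal (t ^ (-(1:ℝ)/p)) ^ q with hLqI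
  have hLqI_eq : LqI = ∫⁻ t in Set.Ioc (0:ℝ) 1, ENNReal.ofReal (t ^ (-(q/p))) := by
    rw [hLqI]
    refine setLIntegral_congr_fun_ae measurableSet_Ioc (Filter.Eventually.of_forall ?_)
    intro t ht
    rw [ENNReal.ofReal_rpow_of_nonneg (Real.rpow_nonneg ht.1.le _) hq0.le,
      ← Real.rpow_mul ht.1.le]
    congr 1
    ring
  have hLqI_top : LqI ≠ ⊤ := by
    rw [hLqI_eq]
    exact hGint.lintegral_lt_top.ne
  refine ⟨(LqI ^ (1/q)) ^ p, ?_, ?_⟩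
  · exact ENNReal.pow_ne_top (ENNReal.rpow_ne_top_of_nonneg (by positivity) hLqI_top)
  intro h hmeas hnn
  by_cases hint : IntegrableOn h (Set.Ioc (0:ℝ) 1) volume
  swap
  · rw [integral_undef hint, ENNReal.ofReal_zero, zero_pow hpn0]
    exact zero_le
  have step1 : ENNReal.ofReal (∫ t in Set.Ioc (0:ℝ) 1, h t)
      = ∫⁻ t in Set.Ioc (0:ℝ) 1, ENNReal.ofReal (h t) :=
    ofReal_integral_eq_lintegral_ofReal hint (Filter.Eventually.of_forall hnn)
  set F : ℝ → ℝ≥0∞ := fun t => ENNReal.ofReal (t ^ ((1:ℝ)/p) * h t) with hF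
  set G : ℝ → ℝ≥0∞ := fun t => ENNReal.ofReal (t ^ (-(1:ℝ)/p)) with hG
  have step2 : ∫⁻ t in Set.Ioc (0:ℝ) 1, ENNReal.ofReal (h t)
      = ∫⁻ t in Set.Ioc (0:ℝ) 1, (F * G) t := by
    refine setLIntegral_congr_fun_ae measurableSet_Ioc (Filter.Eventually.of_forall ?_)
    intro t ht
    simp only [hF, hG, Pi.mul_apply]
    rw [← ENNReal.ofReal_mul (mul_nonneg (Real.rpow_nonneg ht.1.le _) (hnn t))]
    congr 1
    rw [mul_comm (t ^ ((1:ℝ)/p)) (h t), mul_assoc, ← Real.rpow_add ht.1]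
    have he : (1:ℝ)/p + -1/p = 0 := by ring
    rw [he, Real.rpow_zero, mul_one]
  have hFm : AEMeasurable F (volume.restrict (Set.Ioc (0:ℝ) 1)) := by
    exact (ENNReal.measurable_ofReal.comp (((measurable_id'.pow_const _).mul hmeas))).aemeasurable
  have hGm : AEMeasurable G (volume.restrict (Set.Ioc (0:ℝ) 1)) := by
    exact (ENNReal.measurable_ofReal.comp (measurable_id'.pow_const _)).aemeasurable
  have hHold := ENNReal.lintegral_mul_le_Lp_mul_Lq (volume.restrict (Set.Ioc (0:ℝ) 1)) hpq hFm hGm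
  have hFp : ∫⁻ t in Set.Ioc (0:ℝ) 1, F t ^ (p:ℝ)
      = ∫⁻ t in Set.Ioc (0:ℝ) 1, ENNReal.ofReal (t * h t ^ p) := by
    refine setLIntegral_congr_fun_ae measurableSet_Ioc (Filter.Eventually.of_forall ?_)
    intro t ht
    simp only [hF]
    rw [ENNReal.ofReal_rpow_of_nonneg (mul_nonneg (Real.rpow_nonneg ht.1.le _) (hnn t)) hp0.le,
      Real.mul_rpow (Real.rpow_nonneg ht.1.le _) (hnn t),
      ← Real.rpow_mul ht.1.le, one_div, inv_mul_cancel₀ hp0.ne', Real.rpow_one,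
      Real.rpow_natCast]
  calc ENNReal.ofReal (∫ t in Set.Ioc (0:ℝ) 1, h t) ^ p
      = (∫⁻ t in Set.Ioc (0:ℝ) 1, (F * G) t) ^ p := by rw [step1, step2]
    _ ≤ ((∫⁻ t in Set.Ioc (0:ℝ) 1, F t ^ (p:ℝ)) ^ (1/(p:ℝ))
          * (∫⁻ t in Set.Ioc (0:ℝ) 1, G t ^ q) ^ (1/q)) ^ p :=
        pow_le_pow_left' hHold p
    _ = (LqI ^ (1/q)) ^ p * ∫⁻ t in Set.Ioc (0:ℝ) 1, ENNReal.ofReal (t * h t ^ p) := by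
        rw [mul_pow, hFp]
        rw [mul_comm]
        congr 1
        rw [← ENNReal.rpow_natCast (_ ^ (1/(p:ℝ))) p, ← ENNReal.rpow_mul, one_div,
          inv_mul_cancel₀ (by exact_mod_cast hp0.ne'), ENNReal.rpow_one]

private lemma smul_change_aux (Φ : ℂ → ℝ≥0∞) (hΦ : Measurable Φ) (t : ℝ) (ht : 0 < t) :
    ∫⁻ z in closedBall (0:ℂ) 1, Φ (t • z)
      = ENNReal.ofReal ((t^2)⁻¹) * ∫⁻ w in closedBall (0:ℂ) t, Φ w := by
  have hmeas : Measurable fun z : ℂ => (t : ℝ) • z := (continuous_const_smul t).measurable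
  have hind : ∀ z : ℂ, Set.indicator (closedBall (0:ℂ) 1) (fun z => Φ (t • z)) z
      = Set.indicator (closedBall (0:ℂ) t) Φ (t • z) := by
    intro z
    by_cases hz : z ∈ closedBall (0:ℂ) 1
    · rw [Set.indicator_of_mem hz, Set.indicator_of_mem]
      rw [mem_closedBall_zero_iff] at hz ⊢
      rw [norm_smul, Real.norm_eq_abs, abs_of_pos ht]
      nlinarith
    · rw [Set.indicator_of_notMem hz, Set.indicator_of_notMem]
      rw [mem_closedBall_zero_iff] at hz ⊢
      rw [norm_smul, Real.norm_eq_abs, abs_of_pos ht]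
      intro hc
      apply hz
      nlinarith [(mul_le_iff_le_one_right ht).mp hc]
  have hindm : Measurable (Set.indicator (closedBall (0:ℂ) t) Φ) :=
    hΦ.indicator measurableSet_closedBall
  calc ∫⁻ z in closedBall (0:ℂ) 1, Φ (t • z)
      = ∫⁻ z, Set.indicator (closedBall (0:ℂ) 1) (fun z => Φ (t • z)) z := by
        rw [lintegral_indicator measurableSet_closedBall]
    _ = ∫⁻ z, Set.indicator (closedBall (0:ℂ) t) Φ (t • z) := lintegral_congr hind
    _ = ∫⁻ w, Set.indicator (closedBall (0:ℂ) t) Φ w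
          ∂(Measure.map (fun z : ℂ => t • z) volume) := by
        rw [lintegral_map hindm hmeas]
    _ = ENNReal.ofReal ((t^2)⁻¹) * ∫⁻ w in closedBall (0:ℂ) t, Φ w := by
        rw [MeasureTheory.Measure.map_addHaar_smul volume ht.ne', lintegral_smul_measure,
          lintegral_indicator measurableSet_closedBall, Complex.finrank_real_complex,
          abs_of_nonneg (by positivity), smul_eq_mul]

private lemma t_int_aux (α : ℝ) (hα : 0 < α) (a : ℝ) (ha : 0 < a) (ha1 : a ≤ 1) :
    ∫⁻ t in Set.Icc a 1, ENNReal.ofReal (t ^ (-α - 1))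
      ≤ ENNReal.ofReal (a ^ (-α) / α) := by
  have hmem : (0:ℝ) ∉ Set.uIcc a 1 := by
    rw [Set.uIcc_of_le ha1]
    intro h
    exact absurd h.1 (by linarith)
  have hii : IntervalIntegrable (fun t : ℝ => t ^ (-α - 1)) volume a 1 :=
    intervalIntegral.intervalIntegrable_rpow (Or.inr hmem)
  have hint : IntegrableOn (fun t : ℝ => t ^ (-α - 1)) (Set.Icc a 1) volume := by
    rw [integrableOn_Icc_iff_integrableOn_Ioc]
    rwa [intervalIntegrable_iff_integrableOn_Ioc_of_le ha1] at hii
  have hnn : 0 ≤ᵐ[volume.restrict (Set.Icc a 1)] fun t : ℝ => t ^ (-α - 1) := by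
    filter_upwards [ae_restrict_mem measurableSet_Icc] with t ht
    exact Real.rpow_nonneg (by linarith [ht.1]) _
  rw [← ofReal_integral_eq_lintegral_ofReal hint hnn]
  apply ENNReal.ofReal_le_ofReal
  rw [MeasureTheory.integral_Icc_eq_integral_Ioc, ← intervalIntegral.integral_of_le ha1,
    integral_rpow (Or.inr ⟨by linarith, hmem⟩)]
  have h1 : (-α - 1) + 1 = -α := by ring
  rw [h1, Real.one_rpow]
  have he : (1 - a ^ (-α)) / (-α) = (a ^ (-α) - 1) / α := by
    rw [div_neg, ← neg_div, neg_sub]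
  rw [he]
  gcongr
  linarith

private lemma key0 (p : ℕ) (hp : 2 < p) (α : ℝ) (hα : 0 < α) :
    ∃ K : ℝ≥0∞, K ≠ ⊤ ∧ ∀ (f : ℂ → ℝ) (U : Set ℂ), IsOpen U → closedBall (0:ℂ) 1 ⊆ U →
      ContDiffOn ℝ 1 f U → f 0 = 0 →
      ∫⁻ z in closedBall (0:ℂ) 1, ENNReal.ofReal (‖z‖ ^ (α - p) * |f z| ^ p)
        ≤ K * ∫⁻ z in closedBall (0:ℂ) 1, ENNReal.ofReal (‖fderiv ℝ f z‖ ^ p) := by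
  obtain ⟨L, hLtop, hL⟩ := hoelder_aux p hp
  refine ⟨L * ENNReal.ofReal (1/α), ENNReal.mul_ne_top hLtop ENNReal.ofReal_ne_top, ?_⟩
  intro f U hU hUB hf hf0
  set B : Set ℂ := closedBall (0:ℂ) 1 with hB
  set D : ℂ → ℝ := fun w => ‖fderiv ℝ f w‖ with hD
  have hDmeas : Measurable D := (measurable_fderiv ℝ f).norm
  set Φ : ℂ → ℝ≥0∞ := fun w => ENNReal.ofReal (‖w‖ ^ α * D w ^ p) with hΦ
  have hΦmeas : Measurable Φ := by
    apply ENNReal.measurable_ofReal.comp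
    exact (measurable_norm.pow_const α).mul (hDmeas.pow_const p)
  set J : ℂ → ℝ≥0∞ :=
    fun z => ∫⁻ t in Set.Ioc (0:ℝ) 1, ENNReal.ofReal (t * D (t • z) ^ p) with hJ
  -- Step 1: pointwise bound
  have step1 : ∀ z ∈ B, z ≠ 0 →
      ENNReal.ofReal (‖z‖ ^ (α - p) * |f z| ^ p)
        ≤ L * (ENNReal.ofReal (‖z‖ ^ α) * J z) := by
    intro z hzB hz0
    have hznorm : 0 < ‖z‖ := norm_pos_iff.2 hz0
    set h : ℝ → ℝ := fun t => |(fderiv ℝ f (t • z)) z| with hh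
    have hmeas : Measurable h := by
      have h1 : Measurable fun t : ℝ => t • z := by
        exact (continuous_id.smul continuous_const).measurable
      exact ((measurable_fderiv_apply_const ℝ f z).comp h1).abs
    have hfb : |f z| ≤ ∫ t in Set.Ioc (0:ℝ) 1, h t := by
      rw [← intervalIntegral.integral_of_le zero_le_one]
      exact ftc_bound_aux f U hU hUB hf hf0 z hzB
    have hfb2 : ENNReal.ofReal (|f z| ^ p)
        ≤ L * ∫⁻ t in Set.Ioc (0:ℝ) 1, ENNReal.ofReal (t * h t ^ p) := by
      calc ENNReal.ofReal (|f z| ^ p) = ENNReal.ofReal (|f z|) ^ p :=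
            (ENNReal.ofReal_pow (abs_nonneg _) p)
        _ ≤ ENNReal.ofReal (∫ t in Set.Ioc (0:ℝ) 1, h t) ^ p :=
            pow_le_pow_left' (ENNReal.ofReal_le_ofReal hfb) p
        _ ≤ L * ∫⁻ t in Set.Ioc (0:ℝ) 1, ENNReal.ofReal (t * h t ^ p) :=
            hL h hmeas (fun t => abs_nonneg _)
    have hfb3 : (∫⁻ t in Set.Ioc (0:ℝ) 1, ENNReal.ofReal (t * h t ^ p))
        ≤ ENNReal.ofReal (‖z‖ ^ p) * J z := by
      rw [hJ, ← lintegral_const_mul' _ _ ENNReal.ofReal_ne_top]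
      refine setLIntegral_mono_ae (by fun_prop) ?_
      filter_upwards with t ht
      rw [← ENNReal.ofReal_mul (by positivity)]
      apply ENNReal.ofReal_le_ofReal
      have hle : h t ≤ D (t • z) * ‖z‖ := by
        rw [hh, hD]
        simpa [Real.norm_eq_abs] using (fderiv ℝ f (t • z)).le_opNorm z
      calc t * h t ^ p ≤ t * ((D (t • z) * ‖z‖) ^ p) := by
            apply mul_le_mul_of_nonneg_left _ ht.1.le
            exact pow_le_pow_left₀ (abs_nonneg _) hle p
        _ = ‖z‖ ^ p * (t * D (t • z) ^ p) := by rw [mul_pow]; ring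
    calc ENNReal.ofReal (‖z‖ ^ (α - p) * |f z| ^ p)
        = ENNReal.ofReal (‖z‖ ^ (α - p)) * ENNReal.ofReal (|f z| ^ p) := by
          rw [← ENNReal.ofReal_mul (Real.rpow_nonneg (norm_nonneg _) _)]
      _ ≤ ENNReal.ofReal (‖z‖ ^ (α - p)) *
            (L * (ENNReal.ofReal (‖z‖ ^ p) * J z)) := by
          exact mul_le_mul_right (hfb2.trans (mul_le_mul_right hfb3 L)) _
      _ = L * ((ENNReal.ofReal (‖z‖ ^ (α - p)) * ENNReal.ofReal (‖z‖ ^ p)) * J z) := by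
          ring
      _ = L * (ENNReal.ofReal (‖z‖ ^ α) * J z) := by
          rw [← ENNReal.ofReal_mul (Real.rpow_nonneg (norm_nonneg _) _)]
          congr 2
          rw [← Real.rpow_natCast ‖z‖ p, ← Real.rpow_add hznorm]
          congr 1
          ring
  -- Step 2 : reduce to the weighted double integral
  have step2 : ∫⁻ z in B, ENNReal.ofReal (‖z‖ ^ (α - p) * |f z| ^ p)
      ≤ L * ∫⁻ z in B, ENNReal.ofReal (‖z‖ ^ α) * J z := by
    rw [← lintegral_const_mul' _ _ hLtop]
    apply lintegral_mono_ae
    have h0 : ∀ᵐ z ∂(volume.restrict B), z ≠ (0:ℂ) := by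
      apply ae_restrict_of_ae
      rw [ae_iff]
      simpa using measure_singleton (0:ℂ)
    filter_upwards [ae_restrict_mem measurableSet_closedBall, h0] with z hzB hz0
    exact step1 z hzB hz0
  -- Step 3 : Tonelli
  have hgmeas : Measurable (fun x : ℂ × ℝ =>
      ENNReal.ofReal (‖x.1‖ ^ α) * ENNReal.ofReal (x.2 * D (x.2 • x.1) ^ p)) := by
    apply Measurable.mul (f := fun x : ℂ × ℝ => ENNReal.ofReal (‖x.1‖ ^ α))
      (g := fun x : ℂ × ℝ => ENNReal.ofReal (x.2 * D (x.2 • x.1) ^ p))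
    · exact ENNReal.measurable_ofReal.comp ((measurable_norm.pow_const α).comp measurable_fst)
    · refine ENNReal.measurable_ofReal.comp (measurable_snd.mul ?_)
      exact (hDmeas.comp (measurable_snd.smul measurable_fst)).pow_const p
  have step3 : ∫⁻ z in B, ENNReal.ofReal (‖z‖ ^ α) * J z
      = ∫⁻ t in Set.Ioc (0:ℝ) 1,
          ∫⁻ z in B, ENNReal.ofReal (‖z‖ ^ α) * ENNReal.ofReal (t * D (t • z) ^ p) := by
    have h1 : ∀ z : ℂ, ENNReal.ofReal (‖z‖ ^ α) * J z
        = ∫⁻ t in Set.Ioc (0:ℝ) 1,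
            ENNReal.ofReal (‖z‖ ^ α) * ENNReal.ofReal (t * D (t • z) ^ p) := by
      intro z
      rw [hJ, ← lintegral_const_mul' _ _ ENNReal.ofReal_ne_top]
    rw [lintegral_congr h1]
    exact lintegral_lintegral_swap (hgmeas.aemeasurable)
  -- Step 4 : change of variables for fixed t
  have step4 : ∀ t : ℝ, t ∈ Set.Ioc (0:ℝ) 1 →
      (∫⁻ z in B, ENNReal.ofReal (‖z‖ ^ α) * ENNReal.ofReal (t * D (t • z) ^ p))
        = ENNReal.ofReal (t ^ (-α - 1)) *
            ∫⁻ w, Set.indicator (closedBall (0:ℂ) t) Φ w := by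
    intro t ht
    have ht0 : 0 < t := ht.1
    have hpt : ∀ z : ℂ, ENNReal.ofReal (‖z‖ ^ α) * ENNReal.ofReal (t * D (t • z) ^ p)
        = ENNReal.ofReal (t ^ (-α - 1)) * (ENNReal.ofReal (t ^ 2) * Φ (t • z)) := by
      intro z
      rw [hΦ, ← ENNReal.ofReal_mul (Real.rpow_nonneg (norm_nonneg _) _),
        ← ENNReal.ofReal_mul (by positivity),
        ← ENNReal.ofReal_mul (Real.rpow_nonneg ht0.le _)]
      congr 1
      have hnorm : ‖t • z‖ = t * ‖z‖ := by
        rw [norm_smul, Real.norm_eq_abs, abs_of_pos ht0]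
      rw [hnorm, Real.mul_rpow ht0.le (norm_nonneg _)]
      have hcanc : t ^ (-α - 1) * t ^ (2:ℕ) * t ^ α = t := by
        rw [← Real.rpow_natCast t 2, ← Real.rpow_add ht0, ← Real.rpow_add ht0]
        have he : -α - 1 + ((2:ℕ):ℝ) + α = 1 := by push_cast; ring
        rw [he, Real.rpow_one]
      linear_combination (-(‖z‖ ^ α) * D (t • z) ^ p) * hcanc
    calc (∫⁻ z in B, ENNReal.ofReal (‖z‖ ^ α) * ENNReal.ofReal (t * D (t • z) ^ p))
        = ∫⁻ z in B, ENNReal.ofReal (t ^ (-α - 1)) * (ENNReal.ofReal (t ^ 2) * Φ (t • z)) := by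
          exact lintegral_congr fun z => hpt z
      _ = ENNReal.ofReal (t ^ (-α - 1)) * (ENNReal.ofReal (t ^ 2) *
            ∫⁻ z in B, Φ (t • z)) := by
          rw [lintegral_const_mul' _ _ ENNReal.ofReal_ne_top,
            lintegral_const_mul' _ _ ENNReal.ofReal_ne_top]
      _ = ENNReal.ofReal (t ^ (-α - 1)) * (ENNReal.ofReal (t ^ 2) *
            (ENNReal.ofReal ((t ^ 2)⁻¹) * ∫⁻ w in closedBall (0:ℂ) t, Φ w)) := by
          rw [smul_change_aux Φ hΦmeas t ht0]
      _ = ENNReal.ofReal (t ^ (-α - 1)) * ∫⁻ w, Set.indicator (closedBall (0:ℂ) t) Φ w := by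
          rw [← mul_assoc (ENNReal.ofReal (t ^ 2)),
            ← ENNReal.ofReal_mul (by positivity),
            mul_inv_cancel₀ (by positivity), ENNReal.ofReal_one, one_mul,
            lintegral_indicator measurableSet_closedBall]
  -- Step 5 : swap again
  have hSmeas : MeasurableSet {x : ℝ × ℂ | ‖x.2‖ ≤ x.1} :=
    (isClosed_le continuous_snd.norm continuous_fst).measurableSet
  have hunc : (fun x : ℝ × ℂ => ENNReal.ofReal (x.1 ^ (-α - 1)) *
      Set.indicator (closedBall (0:ℂ) x.1) Φ x.2)
      = fun x : ℝ × ℂ => ENNReal.ofReal (x.1 ^ (-α - 1)) * Φ x.2 *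
          Set.indicator {x : ℝ × ℂ | ‖x.2‖ ≤ x.1} (fun _ => 1) x := by
    funext x
    by_cases hx : ‖x.2‖ ≤ x.1
    · rw [Set.indicator_of_mem (mem_closedBall_zero_iff.2 hx),
        Set.indicator_of_mem (by exact hx), mul_one]
    · rw [Set.indicator_of_notMem (fun hc => hx (mem_closedBall_zero_iff.1 hc)),
        Set.indicator_of_notMem (by exact hx), mul_zero, mul_zero]
  have huncmeas : Measurable (fun x : ℝ × ℂ => ENNReal.ofReal (x.1 ^ (-α - 1)) *
      Set.indicator (closedBall (0:ℂ) x.1) Φ x.2) := by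
    rw [hunc]
    exact ((ENNReal.measurable_ofReal.comp
      ((measurable_id'.pow_const _).comp measurable_fst)).mul
      (hΦmeas.comp measurable_snd)).mul (measurable_const.indicator hSmeas)
  have step5 : (∫⁻ t in Set.Ioc (0:ℝ) 1, ENNReal.ofReal (t ^ (-α - 1)) *
        ∫⁻ w, Set.indicator (closedBall (0:ℂ) t) Φ w)
      = ∫⁻ w, ∫⁻ t in Set.Ioc (0:ℝ) 1,
          ENNReal.ofReal (t ^ (-α - 1)) * Set.indicator (closedBall (0:ℂ) t) Φ w := by
    have h1 : ∀ t : ℝ, ENNReal.ofReal (t ^ (-α - 1)) *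
        (∫⁻ w, Set.indicator (closedBall (0:ℂ) t) Φ w)
        = ∫⁻ w, ENNReal.ofReal (t ^ (-α - 1)) * Set.indicator (closedBall (0:ℂ) t) Φ w :=
      fun t => (lintegral_const_mul' _ _ ENNReal.ofReal_ne_top).symm
    rw [lintegral_congr h1]
    exact lintegral_lintegral_swap huncmeas.aemeasurable
  -- Step 6 : the t-integral estimate
  have step6 : ∀ w : ℂ, (∫⁻ t in Set.Ioc (0:ℝ) 1,
        ENNReal.ofReal (t ^ (-α - 1)) * Set.indicator (closedBall (0:ℂ) t) Φ w)
      ≤ ENNReal.ofReal (1/α) *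
          Set.indicator (closedBall (0:ℂ) 1) (fun w => ENNReal.ofReal (D w ^ p)) w := by
    intro w
    by_cases hw0 : w = 0
    · have hΦ0 : Φ w = 0 := by rw [hw0, hΦ]; simp [Real.zero_rpow hα.ne']
      have hz : ∀ t : ℝ, ENNReal.ofReal (t ^ (-α - 1)) *
          Set.indicator (closedBall (0:ℂ) t) Φ w = 0 := by
        intro t
        have hi : Set.indicator (closedBall (0:ℂ) t) Φ w = 0 :=
          le_antisymm (hΦ0 ▸ Set.indicator_le_self _ _ w) (zero_le)
        rw [hi, mul_zero]
      rw [lintegral_congr hz, lintegral_zero]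
      exact zero_le
    by_cases hw1 : ‖w‖ ≤ 1
    swap
    · have hz : ∀ t ∈ Set.Ioc (0:ℝ) 1, ENNReal.ofReal (t ^ (-α - 1)) *
          Set.indicator (closedBall (0:ℂ) t) Φ w = 0 := by
        intro t ht
        rw [Set.indicator_of_notMem, mul_zero]
        rw [mem_closedBall_zero_iff]
        intro hc
        exact hw1 (hc.trans ht.2)
      rw [setLIntegral_congr_fun_ae measurableSet_Ioc (Filter.Eventually.of_forall hz),
        lintegral_zero]
      exact zero_le
    · have hwpos : 0 < ‖w‖ := norm_pos_iff.2 hw0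
      have h1 : ∀ t ∈ Set.Ioc (0:ℝ) 1, ENNReal.ofReal (t ^ (-α - 1)) *
          Set.indicator (closedBall (0:ℂ) t) Φ w
          = Φ w * Set.indicator (Set.Ici ‖w‖)
              (fun t => ENNReal.ofReal (t ^ (-α - 1))) t := by
        intro t ht
        by_cases hmem : ‖w‖ ≤ t
        · rw [Set.indicator_of_mem (mem_closedBall_zero_iff.2 hmem),
            Set.indicator_of_mem (by exact hmem)]
          ring
        · rw [Set.indicator_of_notMem (fun hc => hmem (mem_closedBall_zero_iff.1 hc)),
            Set.indicator_of_notMem (by exact hmem), mul_zero, mul_zero]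
      rw [setLIntegral_congr_fun_ae measurableSet_Ioc (Filter.Eventually.of_forall h1),
        lintegral_const_mul' _ _ ENNReal.ofReal_ne_top]
      have h2 : (∫⁻ t in Set.Ioc (0:ℝ) 1, Set.indicator (Set.Ici ‖w‖)
            (fun t => ENNReal.ofReal (t ^ (-α - 1))) t)
          = ∫⁻ t in Set.Icc ‖w‖ 1, ENNReal.ofReal (t ^ (-α - 1)) := by
        have hseteq : Set.Ici ‖w‖ ∩ Set.Ioc (0:ℝ) 1 = Set.Icc ‖w‖ 1 := by
          ext t
          simp only [Set.mem_inter_iff, Set.mem_Ici, Set.mem_Ioc, Set.mem_Icc]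
          constructor
          · rintro ⟨ha, _, hc⟩; exact ⟨ha, hc⟩
          · rintro ⟨ha, hb⟩; exact ⟨ha, lt_of_lt_of_le hwpos ha, hb⟩
        rw [lintegral_indicator measurableSet_Ici,
          Measure.restrict_restrict measurableSet_Ici, hseteq]
      rw [h2]
      calc Φ w * ∫⁻ t in Set.Icc ‖w‖ 1, ENNReal.ofReal (t ^ (-α - 1))
          ≤ Φ w * ENNReal.ofReal (‖w‖ ^ (-α) / α) :=
            mul_le_mul_right (t_int_aux α hα ‖w‖ hwpos hw1) _
        _ = ENNReal.ofReal (1/α) * ENNReal.ofReal (D w ^ p) := by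
            rw [hΦ, ← ENNReal.ofReal_mul (by positivity),
              ← ENNReal.ofReal_mul (by positivity)]
            congr 1
            have hcc : ‖w‖ ^ α * ‖w‖ ^ (-α) = 1 := by
              rw [← Real.rpow_add hwpos]
              simp
            linear_combination (D w ^ p / α) * hcc
        _ = ENNReal.ofReal (1/α) *
              Set.indicator (closedBall (0:ℂ) 1) (fun w => ENNReal.ofReal (D w ^ p)) w := by
            rw [Set.indicator_of_mem (mem_closedBall_zero_iff.2 hw1)]
  -- Final assembly
  calc ∫⁻ z in B, ENNReal.ofReal (‖z‖ ^ (α - p) * |f z| ^ p)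
      ≤ L * ∫⁻ z in B, ENNReal.ofReal (‖z‖ ^ α) * J z := step2
    _ = L * ∫⁻ t in Set.Ioc (0:ℝ) 1, ENNReal.ofReal (t ^ (-α - 1)) *
          ∫⁻ w, Set.indicator (closedBall (0:ℂ) t) Φ w := by
        rw [step3]
        congr 1
        exact setLIntegral_congr_fun_ae measurableSet_Ioc (Filter.Eventually.of_forall step4)
    _ = L * ∫⁻ w, ∫⁻ t in Set.Ioc (0:ℝ) 1,
          ENNReal.ofReal (t ^ (-α - 1)) * Set.indicator (closedBall (0:ℂ) t) Φ w := by
        rw [step5]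
    _ ≤ L * ∫⁻ w, ENNReal.ofReal (1/α) *
          Set.indicator (closedBall (0:ℂ) 1) (fun w => ENNReal.ofReal (D w ^ p)) w :=
        mul_le_mul_right (lintegral_mono step6) L
    _ = L * ENNReal.ofReal (1/α) * ∫⁻ w in closedBall (0:ℂ) 1, ENNReal.ofReal (D w ^ p) := by
        rw [lintegral_const_mul' _ _ ENNReal.ofReal_ne_top,
          lintegral_indicator measurableSet_closedBall, mul_assoc]


/-- Weighted Sobolev estimate on the disk: for an even integer `p > 2`, `0 < ν < (p−2)/p`
and `k ≥ 1`, there is `C = C(p, ν, k) > 0` such that for every `f : ℂ → ℝ` that is `k` times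
continuously differentiable on an open neighborhood of the closed unit disk `D` with
`f 0 = 0`,
`Σ_{j=0}^k ∫_D ‖z‖^{jp−νp−2} ‖D^j f‖^p dA ≤ C · Σ_{j=0}^k ∫_D ‖D^j f‖^p dA`. -/
theorem weighted_sobolev_disk_estimate (p : ℕ) (hp : 2 < p) (hpeven : Even p)
    (ν : ℝ) (hν : 0 < ν) (hν' : ν < ((p : ℝ) - 2) / p) (k : ℕ) (hk : 1 ≤ k) :
    ∃ C > 0, ∀ (f : ℂ → ℝ) (U : Set ℂ), IsOpen U → closedBall (0 : ℂ) 1 ⊆ U →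
      ContDiffOn ℝ k f U → f 0 = 0 →
      (∑ j ∈ Finset.range (k + 1),
          ∫⁻ z in closedBall (0 : ℂ) 1,
            ENNReal.ofReal
              (‖z‖ ^ ((j : ℝ) * p - ν * p - 2) * ‖iteratedFDeriv ℝ j f z‖ ^ p)) ≤
        ENNReal.ofReal
          (C * ∑ j ∈ Finset.range (k + 1),
            ∫ z in closedBall (0 : ℂ) 1, ‖iteratedFDeriv ℝ j f z‖ ^ p) := by
  have hp2 : (2:ℝ) < p := by exact_mod_cast hp
  have hα : 0 < (p:ℝ) - ν * p - 2 := by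
    have h1 : ν * p < ((p:ℝ) - 2) / p * p := by
      apply mul_lt_mul_of_pos_right hν' (by linarith)
    rw [div_mul_cancel₀ _ (by linarith : (p:ℝ) ≠ 0)] at h1
    linarith
  obtain ⟨K, hKtop, hK⟩ := key0 p hp ((p:ℝ) - ν * p - 2) hα
  refine ⟨K.toReal + 1, by positivity, ?_⟩
  intro f U hU hUB hf hf0
  set B : Set ℂ := closedBall (0:ℂ) 1 with hB
  have hcont : ∀ j, j ≤ k → ContinuousOn (iteratedFDeriv ℝ j f) U := by
    intro j hj
    have h1 := hf.continuousOn_iteratedFDerivWithin (m := j) (by exact_mod_cast hj)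
      hU.uniqueDiffOn
    exact h1.congr fun x hx => (iteratedFDerivWithin_of_isOpen j hU hx).symm
  have hInt : ∀ j, j ≤ k →
      IntegrableOn (fun z => ‖iteratedFDeriv ℝ j f z‖ ^ p) B volume := by
    intro j hj
    apply ContinuousOn.integrableOn_compact (isCompact_closedBall _ _)
    exact ((hcont j hj).mono hUB).norm.pow _
  set I : ℕ → ℝ≥0∞ :=
    fun j => ∫⁻ z in B, ENNReal.ofReal (‖iteratedFDeriv ℝ j f z‖ ^ p) with hI
  have hIj : ∀ j, j ≤ k →
      ENNReal.ofReal (∫ z in B, ‖iteratedFDeriv ℝ j f z‖ ^ p) = I j := by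
    intro j hj
    exact ofReal_integral_eq_lintegral_ofReal (hInt j hj)
      (Filter.Eventually.of_forall fun z => by positivity)
  set S : ℝ≥0∞ := ∑ j ∈ Finset.range (k+1), I j with hS
  set T : ℕ → ℝ≥0∞ := fun j => ∫⁻ z in B,
    ENNReal.ofReal (‖z‖ ^ ((j : ℝ) * p - ν * p - 2) * ‖iteratedFDeriv ℝ j f z‖ ^ p) with hT
  -- the j = 0 term
  have hterm0 : T 0 ≤ K * I 1 := by
    have hf1 : ContDiffOn ℝ 1 f U := hf.of_le (by exact_mod_cast hk)
    have hb := hK f U hU hUB hf1 hf0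
    have hlhs : ∀ z : ℂ, ‖z‖ ^ (((0:ℕ) : ℝ) * p - ν * p - 2) * ‖iteratedFDeriv ℝ 0 f z‖ ^ p
        = ‖z‖ ^ (((p:ℝ) - ν * p - 2) - p) * |f z| ^ p := by
      intro z
      rw [norm_iteratedFDeriv_zero, Real.norm_eq_abs]
      congr 2
      push_cast
      ring
    have hrhs : ∀ z : ℂ, ‖iteratedFDeriv ℝ 1 f z‖ = ‖fderiv ℝ f z‖ := by
      intro z
      rw [← norm_iteratedFDeriv_fderiv (n := 0), norm_iteratedFDeriv_zero]
    calc T 0 = ∫⁻ z in B, ENNReal.ofReal (‖z‖ ^ (((p:ℝ) - ν * p - 2) - p) * |f z| ^ p) := by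
          rw [hT]
          exact lintegral_congr fun z => by rw [hlhs z]
      _ ≤ K * ∫⁻ z in B, ENNReal.ofReal (‖fderiv ℝ f z‖ ^ p) := hb
      _ = K * I 1 := by
          rw [hI]
          congr 1
          exact lintegral_congr fun z => by rw [hrhs z]
  -- the j ≥ 1 terms
  have htermj : ∀ j, 1 ≤ j → j ≤ k → T j ≤ I j := by
    intro j hj1 hjk
    apply lintegral_mono_ae
    filter_upwards [ae_restrict_mem measurableSet_closedBall] with z hz
    apply ENNReal.ofReal_le_ofReal
    have hj1' : (1:ℝ) ≤ j := by exact_mod_cast hj1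
    have he : 0 ≤ (j:ℝ) * p - ν * p - 2 := by nlinarith
    have h1 : ‖z‖ ^ ((j:ℝ) * p - ν * p - 2) ≤ 1 :=
      Real.rpow_le_one (norm_nonneg _) (mem_closedBall_zero_iff.1 hz) he
    calc ‖z‖ ^ ((j:ℝ) * p - ν * p - 2) * ‖iteratedFDeriv ℝ j f z‖ ^ p
        ≤ 1 * ‖iteratedFDeriv ℝ j f z‖ ^ p :=
          mul_le_mul_of_nonneg_right h1 (by positivity)
      _ = ‖iteratedFDeriv ℝ j f z‖ ^ p := one_mul _
  -- assembling
  have hI1S : I 1 ≤ S := by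
    rw [hS]
    exact Finset.single_le_sum (f := I) (fun _ _ => zero_le)
      (Finset.mem_range.2 (by omega))
  have hsum1 : (∑ i ∈ Finset.range k, I (i+1)) ≤ S := by
    rw [hS, Finset.sum_range_succ']
    exact le_self_add
  have hmain : (∑ j ∈ Finset.range (k+1), T j) ≤ (1 + K) * S := by
    calc (∑ j ∈ Finset.range (k+1), T j)
        = (∑ i ∈ Finset.range k, T (i+1)) + T 0 := Finset.sum_range_succ' T k
      _ ≤ (∑ i ∈ Finset.range k, I (i+1)) + K * I 1 := by
          apply add_le_add _ hterm0
          apply Finset.sum_le_sum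
          intro i hi
          exact htermj (i+1) (by omega) (by have := Finset.mem_range.1 hi; omega)
      _ ≤ S + K * S := add_le_add hsum1 (mul_le_mul_right hI1S K)
      _ = (1 + K) * S := by ring
  have hRHS : ENNReal.ofReal ((K.toReal + 1) *
        ∑ j ∈ Finset.range (k + 1), ∫ z in B, ‖iteratedFDeriv ℝ j f z‖ ^ p)
      = (1 + K) * S := by
    have hnn : ∀ j ∈ Finset.range (k+1),
        0 ≤ ∫ z in B, ‖iteratedFDeriv ℝ j f z‖ ^ p := by
      intro j _
      exact integral_nonneg fun z => by positivity
    rw [ENNReal.ofReal_mul (by positivity), ENNReal.ofReal_sum_of_nonneg hnn]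
    congr 1
    · rw [ENNReal.ofReal_add ENNReal.toReal_nonneg zero_le_one,
        ENNReal.ofReal_toReal hKtop, ENNReal.ofReal_one, add_comm]
    · rw [hS]
      exact Finset.sum_congr rfl fun j hj => hIj j (by have := Finset.mem_range.1 hj; omega)
  rw [hRHS]
  exact hmain
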